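/- For each γ ∈ ℝ and each α ∈ ℝ with c = (1-2α)/√2, the function u(x,t) = (1/2)(1 + tanh((x + ct + γ)/(2√2))) satisfies the PDE ∂u/∂t = ∂²u/∂x² + u(1-u)(u-α) for all (x,t) ∈ ℝ². -/

import Mathlib

lemma lin (m b y : ℝ) : HasDerivAt (fun s : ℝ => s * m + b) m y := by
  simpa using ((hasDerivAt_id y).mul_const m).add_const b

lemma tanhAux (m b y : ℝ) :
    HasDerivAt (fun s : ℝ => (1/2) * (1 + Real.tanh (s * m + b)))
      ((1/2) * (m / Real.cosh (y * m + b) ^ 2)) y := by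
  have hz := lin m b y
  have hs := (Real.hasDerivAt_sinh (y * m + b)).comp y hz
  have hc := (Real.hasDerivAt_cosh (y * m + b)).comp y hz
  have hC : Real.cosh (y * m + b) ≠ 0 := (Real.cosh_pos _).ne'
  have hdiv := hs.div hc hC
  simp only [Real.tanh_eq_sinh_div_cosh]
  have h := (hdiv.const_add 1).const_mul (1/2 : ℝ)
  convert h using 1
  all_goals try rfl
  simp only [Function.comp_apply]
  have hsq := Real.cosh_sq (y * m + b)
  field_simp
  rw [show m * y = y * m by ring] at *
  linear_combination (-m) * hsq

lemma sechAux (m b y : ℝ) :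
    HasDerivAt (fun s : ℝ => (1/2) * (m / Real.cosh (s * m + b) ^ 2))
      (-(m ^ 2 * Real.sinh (y * m + b) / Real.cosh (y * m + b) ^ 3)) y := by
  have hz := lin m b y
  have hc := (Real.hasDerivAt_cosh (y * m + b)).comp y hz
  have hC : Real.cosh (y * m + b) ≠ 0 := (Real.cosh_pos _).ne'
  have hpow := hc.pow 2
  have hC2 : Real.cosh (y * m + b) ^ 2 ≠ 0 := pow_ne_zero _ hC
  have hdiv := (hasDerivAt_const y m).div hpow hC2
  have h := hdiv.const_mul (1/2 : ℝ)
  convert h using 1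
  all_goals try rfl
  simp only [Function.comp_apply, Pi.pow_apply]
  field_simp
  ring

theorem stmt_2 (α γ c : ℝ) (hc : c = (1 - 2 * α) / Real.sqrt 2)
    (u : ℝ → ℝ → ℝ)
    (hu : ∀ x t : ℝ, u x t = (1/2) * (1 + Real.tanh ((x + c * t + γ) / (2 * Real.sqrt 2)))) :
    ∀ x t : ℝ,
      deriv (fun s => u x s) t =
        deriv (deriv (fun y => u y t)) x + u x t * (1 - u x t) * (u x t - α) := by
  intro x t
  have hs2 : Real.sqrt 2 ≠ 0 := by positivity
  set k : ℝ := (2 * Real.sqrt 2)⁻¹ with hk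
  have hLHS : deriv (fun s => u x s) t = (1/2) * ((c * k) / Real.cosh ((x + c * t + γ) * k) ^ 2) := by
    have hf : (fun s => u x s) = fun s => (1/2) * (1 + Real.tanh (s * (c * k) + (x + γ) * k)) := by
      funext s
      rw [hu]
      have : (x + c * s + γ) / (2 * Real.sqrt 2) = s * (c * k) + (x + γ) * k := by
        rw [hk]; field_simp; ring
      rw [this]
    rw [hf, (tanhAux (c * k) ((x + γ) * k) t).deriv]
    congr 2
    ring
  have hX : deriv (fun y => u y t) = fun y => (1/2) * (k / Real.cosh (y * k + (c * t + γ) * k) ^ 2) := by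
    funext y
    have hf : (fun y => u y t) = fun y => (1/2) * (1 + Real.tanh (y * k + (c * t + γ) * k)) := by
      funext y'
      rw [hu]
      congr 1
      congr 1
      rw [hk]; field_simp; ring
    rw [hf, (tanhAux k ((c * t + γ) * k) y).deriv]
  have hXX : deriv (deriv (fun y => u y t)) x =
      -(k ^ 2 * Real.sinh ((x + c * t + γ) * k) / Real.cosh ((x + c * t + γ) * k) ^ 3) := by
    rw [hX, (sechAux k ((c * t + γ) * k) x).deriv]
    have : x * k + (c * t + γ) * k = (x + c * t + γ) * k := by ring
    rw [this]
  rw [hLHS, hXX, hu]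
  have harg : (x + c * t + γ) / (2 * Real.sqrt 2) = (x + c * t + γ) * k := by
    rw [hk]; field_simp
  rw [harg]
  set z := (x + c * t + γ) * k with hz
  have hC : Real.cosh z ≠ 0 := (Real.cosh_pos _).ne'
  have hsq := Real.cosh_sq z
  have h2 : Real.sqrt 2 ^ 2 = 2 := Real.sq_sqrt (by norm_num)
  have hck : c * k = (1 - 2 * α) / 4 := by
    have h4 : Real.sqrt 2 * (2 * Real.sqrt 2) = 4 := by linear_combination 2 * h2
    rw [hc, hk, div_eq_mul_inv, mul_assoc, ← mul_inv, h4, ← div_eq_mul_inv]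
  have hk2 : k ^ 2 = 1 / 8 := by
    rw [hk]; field_simp; linear_combination (-4) * h2
  rw [Real.tanh_eq_sinh_div_cosh]
  set S := Real.sinh z
  set C := Real.cosh z
  rw [mul_div_assoc' (1/2) (c*k), hck]
  rw [hk2]
  field_simp
  linear_combination (-32*(C+S-2*α*C)) * hsq
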